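/- Let D be a database instance in which all tuples are endogenous and Q a monotone Boolean query with ¬Q(∅). If t ∈ CS(D, ∅, Q) and s ∈ CT(D, D, Q, t), then D∖(s ∪ {t}) is an S-repair of D w.r.t. κ(Q). -/
import Mathlib


/-- `t` is an actual cause for query `Q` in instance `D` with endogenous part `Dn`. -/
def IsCause {U : Type*} [DecidableEq U] (D Dn : Finset U) (Q : Finset U → Prop) (t : U) : Prop :=
  t ∈ Dn ∧ ∃ Γ ⊆ Dn, t ∉ Γ ∧ Q (D \ Γ) ∧ ¬ Q (D \ insert t Γ)

/-- `D'` is an S-repair of `D` w.r.t. the denial constraint `κ(Q)`. -/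
def IsSRepair {U : Type*} [DecidableEq U] (D : Finset U) (Q : Finset U → Prop)
    (D' : Finset U) : Prop :=
  D' ⊆ D ∧ ¬ Q D' ∧ ∀ D'' ⊆ D, ¬ Q D'' → D' ⊆ D'' → D'' = D'

/-- `CT(D, D, Q, t)`: the subset-minimal contingency sets for `t` w.r.t. `Q`. -/
def CT {U : Type*} [DecidableEq U] (D : Finset U) (Q : Finset U → Prop) (t : U) :
    Set (Finset U) :=
  { s | s ⊆ D ∧ Q (D \ s) ∧ ¬ Q (D \ insert t s) ∧ ∀ s'' ⊂ s, Q (D \ insert t s'') }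

/-- Removing an actual cause together with one of its subset-minimal contingency sets
yields an S-repair. -/
theorem cause_and_CT_give_SRepair
    {U : Type*} [DecidableEq U] (D : Finset U) (Q : Finset U → Prop)
    (hmono : ∀ S S' : Finset U, S ⊆ S' → Q S → Q S')
    (hempty : ¬ Q ∅)
    (t : U) (htc : IsCause D D Q t)
    (s : Finset U) (hs : s ∈ CT D Q t) :
    IsSRepair D Q (D \ insert t s) := by
  obtain ⟨hsD, hQs, hQts, hmin⟩ := hs
  obtain ⟨htD, -⟩ := htc
  refine ⟨Finset.sdiff_subset, hQts, ?_⟩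
  intro D'' hD'' hQ'' hsub
  set s' := D \ D'' with hs'
  have hDs' : D \ s' = D'' := by
    rw [hs', Finset.sdiff_sdiff_self_left, Finset.inter_eq_right.mpr hD'']
  have hs'sub : s' ⊆ insert t s := by
    intro x hx
    rw [hs', Finset.mem_sdiff] at hx
    by_contra hxn
    exact hx.2 (hsub (Finset.mem_sdiff.mpr ⟨hx.1, hxn⟩))
  by_cases htD'' : t ∈ D''
  · exfalso
    have hts' : t ∉ s' := by simp [hs', htD'']
    have : s' ⊆ s := fun x hx => by
      rcases Finset.mem_insert.mp (hs'sub hx) with h | h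
      · exact absurd (h ▸ hx) hts'
      · exact h
    exact hQ'' (hDs' ▸ hmono _ _ (Finset.sdiff_subset_sdiff (le_refl D) this) hQs)
  · have hts' : t ∈ s' := Finset.mem_sdiff.mpr ⟨htD, htD''⟩
    have heq : s' = insert t (s'.erase t) := (Finset.insert_erase hts').symm
    have hsub2 : s'.erase t ⊆ s := fun x hx => by
      rcases Finset.mem_insert.mp (hs'sub (Finset.erase_subset _ _ hx)) with h | h
      · exact absurd h (Finset.ne_of_mem_erase hx)
      · exact h
    by_cases hc : s'.erase t = s
    · rw [← hDs', heq, hc]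
    · have h := hmin _ (Finset.ssubset_iff_subset_ne.mpr ⟨hsub2, hc⟩)
      rw [← heq, hDs'] at h
      exact absurd h hQ''
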